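/- With the same notation, if Dᵀ D = diag(n₁+1,…,n_s+1), then h(x₁,…,x_q+τ,…,x_s) = h(x₁,…,x_s) for each q (wherever both sides are defined), i.e., h is doubly periodic in each variable with respect to the lattice ℤ + ℤτ. -/

import Mathlib

open Complex Matrix Finset

private lemma exp_fact (a b : ℂ) :
    -Complex.exp a * Complex.exp b = Complex.exp ((Real.pi : ℂ) * I + a + b) := by
  rw [Complex.exp_add, Complex.exp_add, Complex.exp_pi_mul_I]; ring

private lemma theta_zmul (θ : ℂ → ℂ) (τ : ℂ)
    (hper : ∀ v : ℂ, θ (v + τ) =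
      -Complex.exp (-(Real.pi * I * τ)) * Complex.exp (-2 * Real.pi * I * v) * θ v)
    (m : ℤ) (v : ℂ) :
    θ (v + m * τ) =
      Complex.exp ((Real.pi : ℂ) * I * (m - m ^ 2 * τ - 2 * m * v)) * θ v := by
  have hper' : ∀ w : ℂ, θ (w + τ) =
      Complex.exp ((Real.pi : ℂ) * I * (1 - τ - 2 * w)) * θ w := by
    intro w
    rw [hper w, exp_fact]
    congr 1
    ring
  induction m using Int.induction_on with
  | zero => simp
  | succ k ih =>
      have h1 : v + (((k : ℤ) + 1 : ℤ) : ℂ) * τ = (v + ((k : ℤ) : ℂ) * τ) + τ := by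
        push_cast; ring
      rw [h1, hper', ih, ← mul_assoc, ← Complex.exp_add]
      congr 2
      push_cast
      ring
  | pred k ih =>
      have h1 : (v + ((-(k : ℤ) - 1 : ℤ) : ℂ) * τ) + τ = v + ((-(k : ℤ) : ℤ) : ℂ) * τ := by
        push_cast; ring
      have h2 := hper' (v + ((-(k : ℤ) - 1 : ℤ) : ℂ) * τ)
      rw [h1, ih] at h2
      have h4 : θ (v + ((-(k : ℤ) - 1 : ℤ) : ℂ) * τ) =
          Complex.exp ((Real.pi : ℂ) * I * ((-(k:ℤ) : ℂ) - (-(k:ℤ) : ℂ) ^ 2 * τ - 2 * (-(k:ℤ) : ℂ) * v)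
            - (Real.pi : ℂ) * I * (1 - τ - 2 * (v + ((-(k : ℤ) - 1 : ℤ) : ℂ) * τ))) * θ v := by
        rw [Complex.exp_sub, div_mul_eq_mul_div, eq_div_iff (Complex.exp_ne_zero _)]
        push_cast at h2 ⊢
        linear_combination -h2
      rw [h4]
      congr 2
      push_cast
      ring

/-- If `θ(v+τ) = -e^{-πiτ} e^{-2πiv} θ(v)` and `Dᵀ D = diag(n₁+1,…,n_s+1)`, then
`h(x) = (∏_p θ(∑_q d_{pq} x_q)/θ'(0)) / ∏_q (θ(x_q)/θ'(0))^{n_q+1}`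
is invariant under `x_q ↦ x_q + τ`. -/
theorem h_periodic_tau (t s : ℕ) (τ : ℂ) (hτ : 0 < τ.im)
    (θ : ℂ → ℂ) (θ'0 : ℂ) (hθ'0 : θ'0 ≠ 0)
    (hper : ∀ v : ℂ, θ (v + τ) =
      -Complex.exp (-(Real.pi * I * τ)) * Complex.exp (-2 * Real.pi * I * v) * θ v)
    (D : Matrix (Fin t) (Fin s) ℤ) (n : Fin s → ℤ)
    (hD : Dᵀ * D = Matrix.diagonal (fun q => n q + 1))
    (x : Fin s → ℂ) (q : Fin s) :
    (∏ p : Fin t, θ (∑ r, (D p r : ℂ) * Function.update x q (x q + τ) r) / θ'0) /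
        ∏ r : Fin s, (θ (Function.update x q (x q + τ) r) / θ'0) ^ (n r + 1) =
      (∏ p : Fin t, θ (∑ r, (D p r : ℂ) * x r) / θ'0) /
        ∏ r : Fin s, (θ (x r) / θ'0) ^ (n r + 1) := by
  set S : Fin t → ℂ := fun p => ∑ r, (D p r : ℂ) * x r with hS
  -- the updated argument of θ in the numerator
  have hupd : ∀ p : Fin t, (∑ r, (D p r : ℂ) * Function.update x q (x q + τ) r)
      = S p + ((D p q : ℤ) : ℂ) * τ := by
    intro p
    have h : ∀ r, Function.update x q (x q + τ) r = x r + (if r = q then τ else 0) := by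
      intro r; rcases eq_or_ne r q with h | h <;> simp [Function.update_apply, h]
    simp only [h, mul_add, Finset.sum_add_distrib, mul_ite, mul_zero,
      Finset.sum_ite_eq', Finset.mem_univ, if_true, hS]
  -- diagonal entry fact
  have hqq : (∑ p, D p q * D p q) = n q + 1 := by
    have h := congrFun (congrFun hD q) q
    simpa [Matrix.mul_apply, Matrix.transpose_apply, Matrix.diagonal] using h
  -- cross terms
  have hd : ∀ r, (∑ p, D p q * D p r) = if q = r then n q + 1 else 0 := by
    intro r
    have h := congrFun (congrFun hD q) r
    simpa [Matrix.mul_apply, Matrix.transpose_apply, Matrix.diagonal] using h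
  have hcross : (∑ p, ((D p q : ℤ) : ℂ) * S p) = ((n q + 1 : ℤ) : ℂ) * x q := by
    calc ∑ p, ((D p q : ℤ) : ℂ) * S p
        = ∑ r, ((∑ p, D p q * D p r : ℤ) : ℂ) * x r := by
          simp only [hS, Finset.mul_sum]
          rw [Finset.sum_comm]
          refine Finset.sum_congr rfl fun r _ => ?_
          push_cast
          rw [Finset.sum_mul]
          exact Finset.sum_congr rfl fun p _ => by ring
      _ = ((n q + 1 : ℤ) : ℂ) * x q := by
          simp only [hd]
          simp [apply_ite (fun z : ℤ => (z : ℂ)), ite_mul, Finset.sum_ite_eq,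
            Finset.mem_univ, if_true]
  -- numerator
  have hnum : (∏ p : Fin t, θ (∑ r, (D p r : ℂ) * Function.update x q (x q + τ) r) / θ'0)
      = Complex.exp ((Real.pi : ℂ) * I *
          ((∑ p, D p q : ℤ) - ((n q + 1 : ℤ) : ℂ) * τ - 2 * ((n q + 1 : ℤ) : ℂ) * x q)) *
        ∏ p : Fin t, θ (S p) / θ'0 := by
    have step : ∀ p : Fin t, θ (∑ r, (D p r : ℂ) * Function.update x q (x q + τ) r) / θ'0
        = Complex.exp ((Real.pi : ℂ) * I *
            (((D p q : ℤ) : ℂ) - ((D p q : ℤ) : ℂ) ^ 2 * τ - 2 * ((D p q : ℤ) : ℂ) * S p)) *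
          (θ (S p) / θ'0) := by
      intro p
      rw [hupd p, theta_zmul θ τ hper (D p q) (S p), mul_div_assoc]
    rw [Finset.prod_congr rfl fun p _ => step p, Finset.prod_mul_distrib, ← Complex.exp_sum]
    congr 2
    have e1 : ((∑ p, D p q : ℤ) : ℂ) = ∑ p, ((D p q : ℤ) : ℂ) := by push_cast; rfl
    have e2 : ((n q + 1 : ℤ) : ℂ) = ∑ p, ((D p q : ℤ) : ℂ) ^ 2 := by
      rw [show (∑ p, ((D p q : ℤ) : ℂ) ^ 2) = ((∑ p, D p q * D p q : ℤ) : ℂ) by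
        push_cast; exact Finset.sum_congr rfl fun p _ => by ring, hqq]
    rw [show (2 : ℂ) * ((n q + 1 : ℤ) : ℂ) * x q = 2 * (((n q + 1 : ℤ) : ℂ) * x q) by ring,
      ← hcross, e1, e2]
    simp only [mul_sub, Finset.mul_sum, Finset.sum_mul, ← Finset.sum_sub_distrib]
    exact Finset.sum_congr rfl fun p _ => by ring
  -- denominator
  have hden : (∏ r : Fin s, (θ (Function.update x q (x q + τ) r) / θ'0) ^ (n r + 1))
      = Complex.exp ((Real.pi : ℂ) * I *
          (((n q + 1 : ℤ) : ℂ) - ((n q + 1 : ℤ) : ℂ) * τ - 2 * ((n q + 1 : ℤ) : ℂ) * x q)) *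
        ∏ r : Fin s, (θ (x r) / θ'0) ^ (n r + 1) := by
    rw [← Finset.mul_prod_erase _ _ (Finset.mem_univ q),
      ← Finset.mul_prod_erase _ (fun r => (θ (x r) / θ'0) ^ (n r + 1)) (Finset.mem_univ q),
      ← mul_assoc]
    have herase : ∏ r ∈ Finset.univ.erase q, (θ (Function.update x q (x q + τ) r) / θ'0) ^ (n r + 1)
        = ∏ r ∈ Finset.univ.erase q, (θ (x r) / θ'0) ^ (n r + 1) := by
      refine Finset.prod_congr rfl fun r hr => ?_
      rw [Function.update_of_ne (Finset.mem_erase.1 hr).1]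
    rw [herase]
    congr 1
    have h1 : θ (x q + τ) = Complex.exp ((Real.pi : ℂ) * I * (1 - τ - 2 * x q)) * θ (x q) := by
      have h := theta_zmul θ τ hper 1 (x q)
      simpa using h
    rw [Function.update_self, h1, mul_div_assoc, mul_zpow, ← Complex.exp_int_mul]
    congr 1
    push_cast
    ring
  -- the two exponential prefactors agree
  have hexp : Complex.exp ((Real.pi : ℂ) * I *
          ((∑ p, D p q : ℤ) - ((n q + 1 : ℤ) : ℂ) * τ - 2 * ((n q + 1 : ℤ) : ℂ) * x q))
      = Complex.exp ((Real.pi : ℂ) * I *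
          (((n q + 1 : ℤ) : ℂ) - ((n q + 1 : ℤ) : ℂ) * τ - 2 * ((n q + 1 : ℤ) : ℂ) * x q)) := by
    have heven : Even ((n q + 1) - ∑ p, D p q) := by
      rw [← hqq, ← Finset.sum_sub_distrib]
      refine Finset.even_sum (f := fun p => D p q * D p q - D p q) fun p _ => ?_
      have h := Int.even_mul_succ_self (D p q - 1)
      have he : (D p q - 1) * (D p q - 1 + 1) = D p q * D p q - D p q := by ring
      rwa [he] at h
    obtain ⟨c, hc⟩ := heven
    have hc' : (∑ p, D p q) = (n q + 1) - 2 * c := by omega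
    rw [show (Real.pi : ℂ) * I *
          (((∑ p, D p q : ℤ) : ℂ) - ((n q + 1 : ℤ) : ℂ) * τ - 2 * ((n q + 1 : ℤ) : ℂ) * x q)
        = (Real.pi : ℂ) * I *
          (((n q + 1 : ℤ) : ℂ) - ((n q + 1 : ℤ) : ℂ) * τ - 2 * ((n q + 1 : ℤ) : ℂ) * x q)
          + ((-c : ℤ) : ℂ) * (2 * Real.pi * I) by
      rw [show ((∑ p, D p q : ℤ) : ℂ) = ((n q + 1 : ℤ) : ℂ) - 2 * (c : ℂ) by
        rw [hc']; push_cast; ring]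
      push_cast; ring]
    rw [Complex.exp_add, Complex.exp_int_mul_two_pi_mul_I, mul_one]
  rw [hnum, hden, hexp, mul_div_mul_left _ _ (Complex.exp_ne_zero _)]
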